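/- Torsion as an alternating product of boundary determinants: Let C_n → ⋯ → C_0 be an acyclic bounded chain complex of finite-dimensional real vector spaces with differential ∂. For each i let B_i := range ∂_{i+1} ⊆ C_i and choose a complement W_i with C_i = B_i ⊕ W_i; then ∂_i restricts to a linear isomorphism ∂̂_i : W_i → B_{i−1}. Choose bases b_i of B_i and f_i of W_i, and equip C_i with the combined basis (b_i, f_i). Let κ be the chain contraction defined by κ = (∂̂_i)⁻¹ on B_{i−1} and κ = 0 on W_{i−1} (so κ∘κ = 0). Let D_i be the matrix of ∂̂_i : W_i → B_{i−1} with respect to the bases f_i and b_{i−1}. Then the matrix of (∂+κ)_{even→odd} : C_even → C_odd with respect to the combined bases has determinant of absolute value ∏_{i=0}^{n} |det D_i|^{(−1)^i}. -/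

import Mathlib

/-- Rank of the chosen complement `W_i` (with `C_i = B_i ⊕ W_i`): for an acyclic complex
the boundary map identifies `W_i ≅ B_{i-1}`, so `W_0 = 0` and `W_{i+1} ≅ B_i`. -/
abbrev wRank (m : ℕ → ℕ) : ℕ → ℕ := fun i => Nat.casesOn i 0 m

/-- The chain space `C_i = B_i ⊕ W_i` in the coordinates given by the chosen bases
`b_i` of `B_i` and `f_i` of `W_i`. -/
abbrev Csp (m : ℕ → ℕ) (i : ℕ) : Type := (Fin (m i) → ℝ) × (Fin (wRank m i) → ℝ)

/-- The boundary map `∂_{i+1} : C_{i+1} → C_i`: it kills `B_{i+1}` and maps `W_{i+1}` to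
`B_i` by the invertible matrix `Dm i` (the matrix `D_{i+1}` of `∂̂_{i+1}`). -/
noncomputable def delMap (m : ℕ → ℕ) (Dm : ∀ i, Matrix (Fin (m i)) (Fin (m i)) ℝ)
    (i : ℕ) : Csp m (i + 1) →ₗ[ℝ] Csp m i :=
  LinearMap.prod
    ((Matrix.mulVecLin (Dm i)).comp
      (LinearMap.snd ℝ (Fin (m (i + 1)) → ℝ) (Fin (wRank m (i + 1)) → ℝ)))
    0

/-- The chain contraction `κ_i : C_i → C_{i+1}` given by `(∂̂_{i+1})⁻¹` on `B_i` and `0`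
on `W_i` (so `κ∘κ = 0`). -/
noncomputable def kapMap (m : ℕ → ℕ) (Dm : ∀ i, Matrix (Fin (m i)) (Fin (m i)) ℝ)
    (i : ℕ) : Csp m i →ₗ[ℝ] Csp m (i + 1) :=
  LinearMap.prod 0
    ((Matrix.mulVecLin (Dm i)⁻¹).comp
      (LinearMap.fst ℝ (Fin (m i) → ℝ) (Fin (wRank m i) → ℝ)))

/-- Index of the even degrees `0 ≤ i ≤ n`. -/
abbrev EvIdx (n : ℕ) : Type := {i : Fin (n + 1) // Even i.1}

/-- Index of the odd degrees `0 < j ≤ n`, parametrized by their (even) predecessors. -/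
abbrev OdIdx (n : ℕ) : Type := {i : Fin n // Even i.1}

/-- `C_even`, the direct sum of the even-degree chain spaces. -/
abbrev CevenSp (m : ℕ → ℕ) (n : ℕ) : Type := ∀ i : EvIdx n, Csp m i.1.1

/-- `C_odd`, the direct sum of the odd-degree chain spaces (an odd degree `j ≤ n` is
written as `j = i + 1` with `i` even). -/
abbrev CoddSp (m : ℕ → ℕ) (n : ℕ) : Type := ∀ i : OdIdx n, Csp m (i.1.1 + 1)

/-- The map `(∂+κ)_{even→odd} : C_even → C_odd`: its component in odd degree `i+1` is
`κ_i` applied to the component of degree `i` plus `∂_{i+2}` applied to the component of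
degree `i+2` (when `i+2 ≤ n`). -/
noncomputable def phiMap (m : ℕ → ℕ) (Dm : ∀ i, Matrix (Fin (m i)) (Fin (m i)) ℝ)
    (n : ℕ) : CevenSp m n →ₗ[ℝ] CoddSp m n :=
  LinearMap.pi fun i : OdIdx n =>
    (kapMap m Dm i.1.1) ∘ₗ
      (LinearMap.proj (R := ℝ) (φ := fun j : EvIdx n => Csp m j.1.1)
        ⟨⟨i.1.1, Nat.lt_succ_of_lt i.1.isLt⟩, i.2⟩)
    + (if h : i.1.1 + 2 ≤ n then
        (delMap m Dm (i.1.1 + 1)) ∘ₗ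
          (LinearMap.proj (R := ℝ) (φ := fun j : EvIdx n => Csp m j.1.1)
            ⟨⟨i.1.1 + 2, by omega⟩, by exact Even.add i.2 even_two⟩)
      else 0)

/-- The combined basis of `C_even` (concatenating the bases `(b_i, f_i)` of the even
`C_i`). -/
noncomputable def evenBasis (m : ℕ → ℕ) (n : ℕ) :
    Module.Basis (Σ i : EvIdx n, (Fin (m i.1.1) ⊕ Fin (wRank m i.1.1))) ℝ (CevenSp m n) :=
  Pi.basis fun i : EvIdx n =>
    (Pi.basisFun ℝ (Fin (m i.1.1))).prod (Pi.basisFun ℝ (Fin (wRank m i.1.1)))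

/-- The combined basis of `C_odd`. -/
noncomputable def oddBasis (m : ℕ → ℕ) (n : ℕ) :
    Module.Basis (Σ i : OdIdx n, (Fin (m (i.1.1 + 1)) ⊕ Fin (wRank m (i.1.1 + 1)))) ℝ
      (CoddSp m n) :=
  Pi.basis fun i : OdIdx n =>
    (Pi.basisFun ℝ (Fin (m (i.1.1 + 1)))).prod (Pi.basisFun ℝ (Fin (wRank m (i.1.1 + 1))))

set_option maxHeartbeats 1600000

section
variable {o : Type*} {κ : o → Type*}

/-- fiber of the first projection of a sigma type -/
def fibEquiv (jj : o) : {x : Σ i, κ i // x.1 = jj} ≃ κ jj where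
  toFun x := cast (congrArg κ x.2) x.1.2
  invFun s := ⟨⟨jj, s⟩, rfl⟩
  left_inv := by rintro ⟨⟨i, s⟩, h⟩; dsimp at h; subst h; rfl
  right_inv s := rfl

end

/-- the diagonal block on the `W` part -/
def wBlk (m : ℕ → ℕ) (Dm : ∀ i, Matrix (Fin (m i)) (Fin (m i)) ℝ) :
    ∀ i, Matrix (Fin (wRank m i)) (Fin (wRank m i)) ℝ
  | 0 => 1
  | j + 1 => Dm j

/-- The structural bijection between the even and odd index sets. -/
def e0 (n : ℕ) (m : ℕ → ℕ) (hmn : m n = 0) :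
    (Σ i : EvIdx n, (Fin (m i.1.1) ⊕ Fin (wRank m i.1.1))) ≃
      (Σ i : OdIdx n, (Fin (m (i.1.1 + 1)) ⊕ Fin (wRank m (i.1.1 + 1)))) where
  toFun x :=
    match x with
    | ⟨⟨⟨iv, hiv⟩, hie⟩, Sum.inl k⟩ =>
      if h : iv < n then ⟨⟨⟨iv, h⟩, hie⟩, Sum.inr k⟩
      else (Fin.cast (show m iv = 0 by
        have : iv = n := by omega
        rw [this, hmn]) k).elim0
    | ⟨⟨⟨0, hiv⟩, hie⟩, Sum.inr k⟩ => k.elim0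
    | ⟨⟨⟨1, hiv⟩, hie⟩, Sum.inr k⟩ => absurd (show Even 1 from hie) (by decide)
    | ⟨⟨⟨l + 2, hiv⟩, hie⟩, Sum.inr k⟩ =>
      ⟨⟨⟨l, by omega⟩, show Even l by rcases (show Even (l + 2) from hie) with ⟨c, hc⟩; exact ⟨c - 1, by omega⟩⟩,
        Sum.inl k⟩
  invFun y :=
    match y with
    | ⟨⟨⟨iv, hiv⟩, hie⟩, Sum.inl k⟩ =>
      if h : iv + 2 ≤ n then
        ⟨⟨⟨iv + 2, by omega⟩,
          show Even (iv + 2) by rcases (show Even iv from hie) with ⟨c, hc⟩; exact ⟨c + 1, by omega⟩⟩, Sum.inr k⟩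
      else (Fin.cast (show m (iv + 1) = 0 by
        have : iv + 1 = n := by omega
        rw [this, hmn]) k).elim0
    | ⟨⟨⟨iv, hiv⟩, hie⟩, Sum.inr k⟩ => ⟨⟨⟨iv, Nat.lt_succ_of_lt hiv⟩, hie⟩, Sum.inl k⟩
  left_inv := by
    rintro ⟨⟨⟨iv, hiv⟩, hie⟩, (k | k)⟩
    · by_cases h : iv < n
      · simp only [dif_pos h]
      · exact (Fin.cast (show m iv = 0 by
          have : iv = n := by omega
          rw [this, hmn]) k).elim0
    · match iv, hiv, hie, k with
      | 0, hiv, hie, k => exact k.elim0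
      | 1, hiv, hie, k => exact absurd (show Even 1 from hie) (by decide)
      | l + 2, hiv, hie, k =>
        simp only [dif_pos (show l + 2 ≤ n by omega)]
  right_inv := by
    rintro ⟨⟨⟨iv, hiv⟩, hie⟩, (k | k)⟩
    · by_cases h : iv + 2 ≤ n
      · simp only [dif_pos h]
      · exact (Fin.cast (show m (iv + 1) = 0 by
          have : iv + 1 = n := by omega
          rw [this, hmn]) k).elim0
    · simp only [dif_pos (show iv < n from hiv)]

lemma N_diag (n : ℕ) (m : ℕ → ℕ) (hmn : m n = 0)
    (Dm : ∀ i, Matrix (Fin (m i)) (Fin (m i)) ℝ)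
    (j : EvIdx n) (s t : Fin (m j.1.1) ⊕ Fin (wRank m j.1.1)) :
    (LinearMap.toMatrix (evenBasis m n) (oddBasis m n) (phiMap m Dm n))
        (e0 n m hmn ⟨j, s⟩) ⟨j, t⟩
      = Matrix.fromBlocks (Dm j.1.1)⁻¹ 0 0 (wBlk m Dm j.1.1) s t := by
  obtain ⟨⟨jv, hj⟩, hje⟩ := j
  rcases s with k | k
  · by_cases h : jv < n
    · simp only [e0, Equiv.coe_fn_mk, dif_pos h]
      by_cases h2 : jv + 2 ≤ n <;>
        rcases t with l | l <;>
          simp [LinearMap.toMatrix_apply, evenBasis, oddBasis, phiMap, kapMap, delMap, h2,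
            Matrix.mulVec_single, Pi.basisFun_apply, Pi.single_eq_of_ne,
            (by omega : jv ≠ jv + 2)]
    · exact (Fin.cast (show m jv = 0 by
        have : jv = n := by omega
        rw [this, hmn]) k).elim0
  · match jv, hj, hje, k with
    | 0, hj, hje, k => exact k.elim0
    | 1, hj, hje, k => exact absurd (show Even 1 from hje) (by decide)
    | l + 2, hj, hje, k =>
      simp only [e0, Equiv.coe_fn_mk]
      have h2 : l + 2 ≤ n := by omega
      rcases t with l' | l' <;>
        simp [LinearMap.toMatrix_apply, evenBasis, oddBasis, phiMap, kapMap, delMap, h2,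
          Matrix.mulVec_single, Pi.basisFun_apply, wBlk,
          Pi.single_eq_of_ne, (by omega : l + 2 ≠ l)]

lemma M_zero_inr (n : ℕ) (m : ℕ → ℕ) (Dm : ∀ i, Matrix (Fin (m i)) (Fin (m i)) ℝ)
    (i : OdIdx n) (k : Fin (wRank m (i.1.1 + 1)))
    (j : EvIdx n) (t : Fin (m j.1.1) ⊕ Fin (wRank m j.1.1))
    (h1 : (j.1.1 : ℕ) ≠ i.1.1) :
    (LinearMap.toMatrix (evenBasis m n) (oddBasis m n) (phiMap m Dm n))
      ⟨i, Sum.inr k⟩ ⟨j, t⟩ = 0 := by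
  obtain ⟨⟨iv, hi⟩, hie⟩ := i
  obtain ⟨⟨jv, hj⟩, hje⟩ := j
  simp only [] at h1
  have hne1 : (⟨⟨iv, Nat.lt_succ_of_lt hi⟩, hie⟩ : EvIdx n) ≠ ⟨⟨jv, hj⟩, hje⟩ := by
    simp only [ne_eq, Subtype.mk.injEq, Fin.mk.injEq]
    omega
  by_cases hc : iv + 2 ≤ n <;>
    simp [LinearMap.toMatrix_apply, phiMap, evenBasis, oddBasis, kapMap, delMap, hc,
      Pi.single_eq_of_ne hne1]

lemma M_zero_inl (n : ℕ) (m : ℕ → ℕ) (Dm : ∀ i, Matrix (Fin (m i)) (Fin (m i)) ℝ)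
    (i : OdIdx n) (k : Fin (m (i.1.1 + 1)))
    (j : EvIdx n) (t : Fin (m j.1.1) ⊕ Fin (wRank m j.1.1))
    (h2 : (j.1.1 : ℕ) ≠ i.1.1 + 2) :
    (LinearMap.toMatrix (evenBasis m n) (oddBasis m n) (phiMap m Dm n))
      ⟨i, Sum.inl k⟩ ⟨j, t⟩ = 0 := by
  obtain ⟨⟨iv, hi⟩, hie⟩ := i
  obtain ⟨⟨jv, hj⟩, hje⟩ := j
  simp only [] at h2
  by_cases hc : iv + 2 ≤ n
  · have hne2 : (⟨⟨iv + 2, by omega⟩, Even.add hie even_two⟩ : EvIdx n) ≠ ⟨⟨jv, hj⟩, hje⟩ := by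
      simp only [ne_eq, Subtype.mk.injEq, Fin.mk.injEq]
      omega
    simp [LinearMap.toMatrix_apply, phiMap, evenBasis, oddBasis, kapMap, delMap, hc,
      Pi.single_eq_of_ne hne2]
  · simp [LinearMap.toMatrix_apply, phiMap, evenBasis, oddBasis, kapMap, delMap, hc]

lemma sq_det (n : ℕ) (m : ℕ → ℕ) (hmn : m n = 0)
    (Dm : ∀ i, Matrix (Fin (m i)) (Fin (m i)) ℝ)
    (a : ℕ) (ha : a < n + 1) (hae : Even a) :
    ((((LinearMap.toMatrix (evenBasis m n) (oddBasis m n) (phiMap m Dm n)).submatrix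
        (e0 n m hmn) id).toSquareBlock
          (fun x : (Σ i : EvIdx n, (Fin (m i.1.1) ⊕ Fin (wRank m i.1.1))) =>
            (x.1.1.1 : ℕ)) a)).det
      = (Dm a)⁻¹.det * (wBlk m Dm a).det := by
  have h' : ∀ x : (Σ i : EvIdx n, (Fin (m i.1.1) ⊕ Fin (wRank m i.1.1))),
      x.1 = (⟨⟨a, ha⟩, hae⟩ : EvIdx n) ↔ (x.1.1.1 : ℕ) = a := by
    rintro ⟨i, s⟩
    constructor
    · rintro rfl; rfl
    · intro h; exact Subtype.ext (Fin.ext h)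
  let Ea : (Fin (m a) ⊕ Fin (wRank m a)) ≃
      {x : Σ i : EvIdx n, (Fin (m i.1.1) ⊕ Fin (wRank m i.1.1)) // (x.1.1.1 : ℕ) = a} :=
    (fibEquiv (⟨⟨a, ha⟩, hae⟩ : EvIdx n)).symm.trans (Equiv.subtypeEquivRight h')
  rw [← Matrix.det_submatrix_equiv_self Ea, ← Matrix.det_fromBlocks_zero₂₁ (Dm a)⁻¹ 0
    (wBlk m Dm a)]
  congr 1
  ext s t
  exact N_diag n m hmn Dm ⟨⟨a, ha⟩, hae⟩ s t

lemma N_tri (n : ℕ) (m : ℕ → ℕ) (hmn : m n = 0)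
    (Dm : ∀ i, Matrix (Fin (m i)) (Fin (m i)) ℝ) :
    (((LinearMap.toMatrix (evenBasis m n) (oddBasis m n) (phiMap m Dm n)).submatrix
        (e0 n m hmn) id).BlockTriangular
          (fun x : (Σ i : EvIdx n, (Fin (m i.1.1) ⊕ Fin (wRank m i.1.1))) =>
            (x.1.1.1 : ℕ))) := by
  rintro ⟨⟨⟨jv, hj⟩, hje⟩, (k | k)⟩ ⟨j, t⟩ hlt
  · have hlt' : (j.1.1 : ℕ) < jv := hlt
    by_cases h : jv < n
    · rw [Matrix.submatrix_apply]
      simp only [e0, Equiv.coe_fn_mk, dif_pos h, id_eq]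
      exact M_zero_inr n m Dm ⟨⟨jv, h⟩, hje⟩ k j t (Nat.ne_of_lt hlt')
    · exact (Fin.cast (show m jv = 0 by
        have : jv = n := by omega
        rw [this, hmn]) k).elim0
  · match jv, hj, hje, k, hlt with
    | 0, hj, hje, k, hlt => exact k.elim0
    | 1, hj, hje, k, hlt => exact absurd (show Even 1 from hje) (by decide)
    | l + 2, hj, hje, k, hlt =>
      rw [Matrix.submatrix_apply]
      simp only [e0, Equiv.coe_fn_mk, id_eq]
      have hlt' : (j.1.1 : ℕ) < l + 2 := hlt
      exact M_zero_inl n m Dm ⟨⟨l, by omega⟩, show Even l by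
          rcases (show Even (l + 2) from hje) with ⟨c, hc⟩; exact ⟨c - 1, by omega⟩⟩
        k j t (Nat.ne_of_lt hlt')

lemma scalar_prod (n : ℕ) (m : ℕ → ℕ) (hmn : m n = 0)
    (Dm : ∀ i, Matrix (Fin (m i)) (Fin (m i)) ℝ) :
    ∏ a ∈ (Finset.range (n + 1)).filter Even,
        (|(Dm a)⁻¹.det| * |(wBlk m Dm a).det|)
      = ∏ i ∈ Finset.range (n + 1),
          |if i = 0 then (1 : ℝ) else (Dm (i - 1)).det| ^ ((-1 : ℤ) ^ i) := by
  rw [Finset.prod_mul_distrib, mul_comm,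
    ← Finset.prod_filter_mul_prod_filter_not (Finset.range (n + 1)) Even]
  congr 1
  · apply Finset.prod_congr rfl
    intro i hi
    have hie : Even i := (Finset.mem_filter.mp hi).2
    rw [hie.neg_one_pow, zpow_one]
    cases i with
    | zero => simp [wBlk]
    | succ j => simp [wBlk]
  · have h1 : ∀ i ∈ (Finset.range (n + 1)).filter (fun i => ¬ Even i),
        |if i = 0 then (1 : ℝ) else (Dm (i - 1)).det| ^ ((-1 : ℤ) ^ i)
          = |(Dm (i - 1)).det|⁻¹ := by
      intro i hi
      obtain ⟨hr, he⟩ := Finset.mem_filter.mp hi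
      have hodd : Odd i := Nat.not_even_iff_odd.mp he
      rw [hodd.neg_one_pow, zpow_neg_one, if_neg (by rintro rfl; exact he Even.zero)]
    rw [Finset.prod_congr rfl h1]
    have h2 : ∀ a ∈ (Finset.range (n + 1)).filter Even,
        |(Dm a)⁻¹.det| = |(Dm a).det|⁻¹ := by
      intro a _
      rw [Matrix.det_nonsing_inv, Ring.inverse_eq_inv, abs_inv]
    rw [Finset.prod_congr rfl h2]
    have h3 : ∏ i ∈ (Finset.range (n + 1)).filter (fun i => ¬ Even i),
        |(Dm (i - 1)).det|⁻¹ = ∏ j ∈ (Finset.range n).filter Even, |(Dm j).det|⁻¹ := by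
      refine Finset.prod_bij' (fun a _ => a - 1) (fun b _ => b + 1) ?_ ?_ ?_ ?_ ?_
      · intro a ha
        obtain ⟨hr, he⟩ := Finset.mem_filter.mp ha
        obtain ⟨c, hc⟩ := Nat.not_even_iff_odd.mp he
        have hr' : a < n + 1 := Finset.mem_range.mp hr
        show a - 1 ∈ Finset.filter Even (Finset.range n)
        exact Finset.mem_filter.mpr ⟨Finset.mem_range.mpr (by omega), ⟨c, by omega⟩⟩
      · intro b hb
        obtain ⟨hr, he⟩ := Finset.mem_filter.mp hb
        obtain ⟨c, hc⟩ := he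
        have hr' : b < n := Finset.mem_range.mp hr
        show b + 1 ∈ Finset.filter (fun i => ¬ Even i) (Finset.range (n + 1))
        exact Finset.mem_filter.mpr ⟨Finset.mem_range.mpr (by omega), by
          rw [Nat.not_even_iff_odd]; exact ⟨c, by omega⟩⟩
      · intro a ha
        obtain ⟨hr, he⟩ := Finset.mem_filter.mp ha
        have : a ≠ 0 := by rintro rfl; exact he Even.zero
        show a - 1 + 1 = a
        omega
      · intro b _
        show b + 1 - 1 = b
        omega
      · intro a _
        rfl
    rw [h3]
    symm
    apply Finset.prod_subset
    · intro a ha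
      obtain ⟨hr, he⟩ := Finset.mem_filter.mp ha
      have hr' : a < n := Finset.mem_range.mp hr
      exact Finset.mem_filter.mpr ⟨Finset.mem_range.mpr (by omega), he⟩
    · intro a ha hna
      obtain ⟨hr, he⟩ := Finset.mem_filter.mp ha
      have hr' : a < n + 1 := Finset.mem_range.mp hr
      have han : a = n := by
        by_contra hc
        exact hna (Finset.mem_filter.mpr ⟨Finset.mem_range.mpr (by omega), he⟩)
      subst han
      haveI : IsEmpty (Fin (m a)) := by rw [hmn]; infer_instance
      rw [Matrix.det_isEmpty]
      norm_num

/-- Torsion as an alternating product of boundary determinants: for the acyclic complex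
`C_i = B_i ⊕ W_i` (trivial above degree `n`) with `∂̂_{i+1} : W_{i+1} ≅ B_i` given by the
invertible matrices `Dm i` in the chosen bases, and `κ` the chain contraction inverting
`∂̂` on boundaries (so `κ∘κ = 0`), the matrix of `(∂+κ)_{even→odd}` in the combined bases
(for any identification `e` of the index sets) has determinant of absolute value
`∏_{i=0}^n |det D_i|^{(−1)^i}`, where `D_0` is the empty matrix (`det D_0 = 1`) and
`D_{i+1}` has determinant `det (Dm i)`. -/
theorem torsion_eq_alternating_product_of_boundary_determinants
    (n : ℕ) (m : ℕ → ℕ) (hm : ∀ i, n ≤ i → m i = 0)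
    (Dm : ∀ i, Matrix (Fin (m i)) (Fin (m i)) ℝ) (hDm : ∀ i, IsUnit (Dm i))
    (e : (Σ i : EvIdx n, (Fin (m i.1.1) ⊕ Fin (wRank m i.1.1))) ≃
      (Σ i : OdIdx n, (Fin (m (i.1.1 + 1)) ⊕ Fin (wRank m (i.1.1 + 1))))) :
    |((LinearMap.toMatrix (evenBasis m n) (oddBasis m n) (phiMap m Dm n)).submatrix
        e id).det|
      = ∏ i ∈ Finset.range (n + 1),
          |if i = 0 then (1 : ℝ) else (Dm (i - 1)).det| ^ ((-1 : ℤ) ^ i) := by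
  classical
  have hmn : m n = 0 := hm n le_rfl
  have hperm : (LinearMap.toMatrix (evenBasis m n) (oddBasis m n)
        (phiMap m Dm n)).submatrix e id
      = ((LinearMap.toMatrix (evenBasis m n) (oddBasis m n) (phiMap m Dm n)).submatrix
          (e0 n m hmn) id).submatrix (e.trans (e0 n m hmn).symm) id := by
    ext x y
    simp [Matrix.submatrix_apply]
  rw [hperm, Matrix.det_permute, abs_mul]
  have habs1 : |((Equiv.Perm.sign (e.trans (e0 n m hmn).symm) : ℤ) : ℝ)| = 1 := by
    rcases Int.units_eq_one_or (Equiv.Perm.sign (e.trans (e0 n m hmn).symm)) with h | h <;>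
      rw [h] <;> norm_num
  rw [habs1, one_mul, (N_tri n m hmn Dm).det, Finset.abs_prod]
  have hsub : (Finset.univ.image
        (fun x : (Σ i : EvIdx n, (Fin (m i.1.1) ⊕ Fin (wRank m i.1.1))) => (x.1.1.1 : ℕ)))
      ⊆ (Finset.range (n + 1)).filter Even := by
    intro a ha
    obtain ⟨x, -, rfl⟩ := Finset.mem_image.mp ha
    exact Finset.mem_filter.mpr ⟨Finset.mem_range.mpr x.1.1.isLt, x.1.2⟩
  have hstep : ∀ a ∈ (Finset.univ.image
      (fun x : (Σ i : EvIdx n, (Fin (m i.1.1) ⊕ Fin (wRank m i.1.1))) => (x.1.1.1 : ℕ))),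
      |((((LinearMap.toMatrix (evenBasis m n) (oddBasis m n) (phiMap m Dm n)).submatrix
        (e0 n m hmn) id).toSquareBlock
          (fun x : (Σ i : EvIdx n, (Fin (m i.1.1) ⊕ Fin (wRank m i.1.1))) =>
            (x.1.1.1 : ℕ)) a)).det|
        = |(Dm a)⁻¹.det| * |(wBlk m Dm a).det| := by
    intro a ha
    obtain ⟨hr, he⟩ := Finset.mem_filter.mp (hsub ha)
    rw [sq_det n m hmn Dm a (Finset.mem_range.mp hr) he, abs_mul]
  rw [Finset.prod_congr rfl hstep,
    Finset.prod_subset hsub (fun a haS hani => ?_), scalar_prod n m hmn Dm]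
  have h1 : IsEmpty (Fin (m a) ⊕ Fin (wRank m a)) := by
    constructor
    intro s
    obtain ⟨hr, he⟩ := Finset.mem_filter.mp haS
    exact hani (Finset.mem_image.mpr
      ⟨⟨⟨⟨a, Finset.mem_range.mp hr⟩, he⟩, s⟩, Finset.mem_univ _, rfl⟩)
  haveI : IsEmpty (Fin (m a)) := ⟨fun k => h1.false (Sum.inl k)⟩
  haveI : IsEmpty (Fin (wRank m a)) := ⟨fun k => h1.false (Sum.inr k)⟩
  rw [Matrix.det_isEmpty, Matrix.det_isEmpty]
  norm_num
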